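/- Let 2 ≤ k ≤ n and let Λ = (λ_1,…,λ_n) ∈ ℝ^n. If Λ ∈ Γ_k^+, then for every index 1 ≤ i ≤ n the vector (Λ|i) ∈ ℝ^{n−1} obtained by deleting the i-th coordinate lies in the Gårding cone Γ_{k−1}^+ of ℝ^{n−1}; likewise, if Λ ∈ Γ̄_k^+ then (Λ|i) ∈ Γ̄_{k−1}^+. -/

import Mathlib

open Polynomial

/-- The `k`-th elementary symmetric polynomial of `x : Fin n → ℝ`. -/
noncomputable def sigmaElem (n k : ℕ) (x : Fin n → ℝ) : ℝ :=
  ∑ s ∈ Finset.univ.powersetCard k, ∏ i ∈ s, x i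

/-- The Gårding cone `Γ_k^+ ⊆ ℝ^n`: the connected component of
`{σ_k > 0}` containing `(1, …, 1)`. -/
def GammaPlus (n k : ℕ) : Set (Fin n → ℝ) :=
  connectedComponentIn {x | 0 < sigmaElem n k x} (fun _ => 1)

/-- `(Λ|i)`: remove the `i`-th coordinate of a vector in `ℝ^{n+1}`. -/
def removeIdx {n : ℕ} (i : Fin (n + 1)) (x : Fin (n + 1) → ℝ) : Fin n → ℝ :=
  fun j => x (i.succAbove j)

namespace GardingAux

lemma sigmaElem_continuous (n k : ℕ) : Continuous (sigmaElem n k) := by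
  unfold sigmaElem
  exact continuous_finset_sum _ fun s _ =>
    continuous_finset_prod _ fun i _ => continuous_apply i

lemma sigmaElem_zero (n : ℕ) (x : Fin n → ℝ) : sigmaElem n 0 x = 1 := by
  simp [sigmaElem]

lemma sigmaElem_of_lt {n k : ℕ} (h : n < k) (x : Fin n → ℝ) : sigmaElem n k x = 0 := by
  unfold sigmaElem
  rw [Finset.powersetCard_eq_empty.mpr (by simpa using h), Finset.sum_empty]

lemma sigmaElem_ones (n k : ℕ) : sigmaElem n k (fun _ => 1) = (n.choose k : ℝ) := by
  unfold sigmaElem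
  simp

/-- The polynomial `∏ i, (X + C (x i))`. -/
noncomputable def elemPoly (n : ℕ) (x : Fin n → ℝ) : ℝ[X] :=
  ∏ i, (X + C (x i))

lemma elemPoly_monic (n : ℕ) (x : Fin n → ℝ) : (elemPoly n x).Monic :=
  Polynomial.monic_prod_of_monic _ _ fun i _ => monic_X_add_C _

lemma elemPoly_natDegree (n : ℕ) (x : Fin n → ℝ) : (elemPoly n x).natDegree = n := by
  rw [elemPoly, Polynomial.natDegree_prod_of_monic _ _ fun i _ => monic_X_add_C _]
  simp [natDegree_X_add_C]

lemma elemPoly_roots_card (n : ℕ) (x : Fin n → ℝ) :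
    Multiset.card (elemPoly n x).roots = n := by
  have hs : (elemPoly n x).Splits := by
    apply Splits.prod
    intro i _
    have h : X + C (x i) = X - C (-(x i)) := by rw [map_neg, sub_neg_eq_add]
    rw [h]
    exact Splits.X_sub_C _
  rw [splits_iff_card_roots.mp hs, elemPoly_natDegree]

lemma coeff_elemPoly {n j : ℕ} (h : j ≤ n) (x : Fin n → ℝ) :
    (elemPoly n x).coeff (n - j) = sigmaElem n j x := by
  have hcard : (Finset.univ : Finset (Fin n)).card = n := by simp
  rw [elemPoly, Finset.prod_X_add_C_coeff _ _ (by rw [hcard]; omega)]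
  unfold sigmaElem
  have : (Finset.univ : Finset (Fin n)).card - (n - j) = j := by rw [hcard]; omega
  rw [this]

lemma iter_deriv_facts (P : ℝ[X]) (hd : Multiset.card P.roots = P.natDegree) :
    ∀ m, m ≤ P.natDegree →
      (derivative^[m] P).natDegree = P.natDegree - m ∧
      Multiset.card (derivative^[m] P).roots = P.natDegree - m := by
  intro m
  induction m with
  | zero => intro _; exact ⟨by simp, by simpa using hd⟩
  | succ m ih =>
    intro hm
    obtain ⟨h1, h2⟩ := ih (by omega)
    rw [Function.iterate_succ_apply']
    have ha := Polynomial.card_roots_le_derivative (derivative^[m] P)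
    have hb := Polynomial.natDegree_derivative_le (derivative^[m] P)
    have hc := Polynomial.card_roots' (derivative (derivative^[m] P))
    omega

lemma multiset_sum_pos (s : Multiset ℝ) (h : ∀ a ∈ s, 0 < a) (hs : s ≠ 0) : 0 < s.sum := by
  induction s using Multiset.induction with
  | empty => exact absurd rfl hs
  | cons a t ih =>
    rw [Multiset.sum_cons]
    rcases eq_or_ne t 0 with rfl | ht
    · simpa using h a (Multiset.mem_cons_self a 0)
    · have h1 := ih (fun b hb => h b (Multiset.mem_cons_of_mem hb)) ht
      have h2 := h a (Multiset.mem_cons_self a t)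
      linarith

lemma esymm_pos (s : Multiset ℝ) (j : ℕ) (hj : j ≤ Multiset.card s)
    (h : ∀ a ∈ s, 0 < a) : 0 < s.esymm j := by
  rw [Multiset.esymm]
  apply multiset_sum_pos
  · intro a ha
    rw [Multiset.mem_map] at ha
    obtain ⟨t, ht, rfl⟩ := ha
    rw [Multiset.mem_powersetCard] at ht
    exact Multiset.prod_pos fun b hb => h b (Multiset.mem_of_le ht.1 hb)
  · intro h0
    have hcard : Multiset.card ((Multiset.powersetCard j s).map Multiset.prod)
        = (Multiset.card s).choose j := by
      rw [Multiset.card_map, Multiset.card_powersetCard]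
    rw [h0] at hcard
    simp only [Multiset.card_zero] at hcard
    have := Nat.choose_pos hj
    omega

/-- Key analytic lemma: if `σ_j ≥ 0` for `1 ≤ j ≤ k` and `σ_k > 0`, then all these
`σ_j` are strictly positive.  Proved via real-rootedness of iterated derivatives of
`∏ (X + x i)`. -/
lemma sigma_pos_of_nonneg {N k : ℕ} (hk1 : 1 ≤ k) (hkN : k ≤ N) (x : Fin N → ℝ)
    (hnn : ∀ j, 1 ≤ j → j ≤ k → 0 ≤ sigmaElem N j x)
    (hpos : 0 < sigmaElem N k x) :
    ∀ j, 1 ≤ j → j ≤ k → 0 < sigmaElem N j x := by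
  set P := elemPoly N x with hP
  set Q := derivative^[N - k] P with hQ
  obtain ⟨hQdeg, hQroots⟩ := iter_deriv_facts P
    (by rw [elemPoly_roots_card, elemPoly_natDegree]) (N - k)
    (by rw [elemPoly_natDegree]; omega)
  rw [elemPoly_natDegree] at hQdeg hQroots
  have hk' : N - (N - k) = k := by omega
  rw [hk'] at hQdeg hQroots
  have hdpos : ∀ j, j ≤ k → (0:ℝ) < ((N - j).descFactorial (N - k) : ℝ) := by
    intro j hj
    have hne : (N - j).descFactorial (N - k) ≠ 0 := by
      rw [Ne, Nat.descFactorial_eq_zero_iff_lt]; omega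
    exact_mod_cast Nat.pos_of_ne_zero hne
  have hcoeff : ∀ j, j ≤ k → Q.coeff (k - j)
      = ((N - j).descFactorial (N - k) : ℝ) * sigmaElem N j x := by
    intro j hj
    rw [hQ, Polynomial.coeff_iterate_derivative]
    have h1 : k - j + (N - k) = N - j := by omega
    rw [h1, coeff_elemPoly (by omega) x, nsmul_eq_mul]
  have hcoeff_nonneg : ∀ i, i ≤ k → 0 ≤ Q.coeff i := by
    intro i hi
    have h2 : k - (k - i) = i := by omega
    have hc := hcoeff (k - i) (by omega)
    rw [h2] at hc
    rw [hc]
    rcases Nat.eq_zero_or_pos (k - i) with h0 | h0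
    · rw [h0, sigmaElem_zero]
      exact le_of_lt (by simpa using hdpos 0 (by omega))
    · exact mul_nonneg (le_of_lt (hdpos _ (by omega))) (hnn _ h0 (by omega))
  have hc0 : 0 < Q.coeff 0 := by
    have hc := hcoeff k le_rfl
    rw [Nat.sub_self] at hc
    rw [hc]
    exact mul_pos (hdpos k le_rfl) hpos
  -- all roots of Q are negative
  have hneg : ∀ r ∈ Q.roots, r < 0 := by
    intro r hr
    by_contra hge
    push_neg at hge
    have hr0 : Q.eval r = 0 := (Polynomial.mem_roots'.mp hr).2
    have hgt : 0 < Q.eval r := by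
      rw [Polynomial.eval_eq_sum_range]
      apply Finset.sum_pos'
      · intro i hi
        rw [Finset.mem_range, hQdeg] at hi
        exact mul_nonneg (hcoeff_nonneg i (by omega)) (pow_nonneg hge i)
      · exact ⟨0, Finset.mem_range.mpr (by omega), by simpa using hc0⟩
    linarith [hr0 ▸ hgt]
  have hlc : 0 < Q.leadingCoeff := by
    rw [Polynomial.leadingCoeff, hQdeg]
    have hc := hcoeff 0 (by omega)
    rw [Nat.sub_zero, sigmaElem_zero, mul_one] at hc
    rw [hc]
    exact hdpos 0 (by omega)
  intro j hj1 hjk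
  have hcv := Polynomial.coeff_eq_esymm_roots_of_card
    (p := Q) (by rw [hQroots, hQdeg]) (k := k - j) (by rw [hQdeg]; omega)
  rw [hQdeg] at hcv
  have hjj : k - (k - j) = j := by omega
  rw [hjj] at hcv
  have hesymm : 0 < (Q.roots.map Neg.neg).esymm j := by
    apply esymm_pos
    · rw [Multiset.card_map, hQroots]; omega
    · intro a ha
      rw [Multiset.mem_map] at ha
      obtain ⟨r, hr, rfl⟩ := ha
      simpa using hneg r hr
  rw [Multiset.esymm_neg] at hesymm
  have hQc : 0 < Q.coeff (k - j) := by
    rw [hcv]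
    calc (0:ℝ) < Q.leadingCoeff * ((-1) ^ j * Multiset.esymm Q.roots j) :=
          mul_pos hlc hesymm
      _ = Q.leadingCoeff * (-1) ^ j * Multiset.esymm Q.roots j := by ring
  have hc := hcoeff j hjk
  rw [hc] at hQc
  have hd := hdpos j hjk
  nlinarith

lemma sigmaElem_update {N : ℕ} (x : Fin (N + 1) → ℝ) (i : Fin (N + 1)) (s : ℝ) {j : ℕ}
    (hj1 : 1 ≤ j) (hj : j ≤ N + 1) :
    sigmaElem (N + 1) j (Function.update x i s)
      = sigmaElem N j (removeIdx i x) + s * sigmaElem N (j - 1) (removeIdx i x) := by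
  have hsplit : elemPoly (N + 1) (Function.update x i s)
      = (X + C s) * elemPoly N (removeIdx i x) := by
    rw [elemPoly, Fin.prod_univ_succAbove _ i]
    congr 1
    · rw [Function.update_self]
    · rw [elemPoly]
      refine Finset.prod_congr rfl fun m _ => ?_
      rw [removeIdx, Function.update_of_ne (Fin.succAbove_ne i m)]
  rcases Nat.lt_or_ge j (N + 1) with hlt | hge
  · have hjN : j ≤ N := by omega
    have e1 := coeff_elemPoly (n := N + 1) (j := j) (by omega) (Function.update x i s)
    rw [← e1, hsplit]
    have hidx : N + 1 - j = (N - j) + 1 := by omega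
    rw [hidx, add_mul, Polynomial.coeff_add, Polynomial.coeff_X_mul, Polynomial.coeff_C_mul]
    have h2 : N - j + 1 = N - (j - 1) := by omega
    rw [coeff_elemPoly hjN, h2, coeff_elemPoly (by omega)]
  · have hj' : j = N + 1 := by omega
    subst hj'
    have e1 := coeff_elemPoly (n := N + 1) (j := N + 1) le_rfl (Function.update x i s)
    rw [Nat.sub_self] at e1
    rw [← e1, hsplit, Polynomial.mul_coeff_zero]
    have hXC : (X + C s).coeff 0 = s := by simp
    have e2 := coeff_elemPoly (n := N) (j := N) le_rfl (removeIdx i x)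
    rw [Nat.sub_self] at e2
    rw [hXC, e2, sigmaElem_of_lt (show N < N + 1 by omega), Nat.add_sub_cancel]
    ring

lemma isOpen_Spos (N k : ℕ) : IsOpen {x : Fin N → ℝ | 0 < sigmaElem N k x} :=
  isOpen_lt continuous_const (sigmaElem_continuous N k)

lemma ones_mem_Spos {N k : ℕ} (h : k ≤ N) :
    (fun _ => (1:ℝ)) ∈ {x : Fin N → ℝ | 0 < sigmaElem N k x} := by
  show 0 < sigmaElem N k (fun _ => 1)
  rw [sigmaElem_ones]
  exact_mod_cast Nat.choose_pos h

lemma ones_mem_gamma {N k : ℕ} (h : k ≤ N) : (fun _ => (1:ℝ)) ∈ GammaPlus N k :=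
  mem_connectedComponentIn (ones_mem_Spos h)

/-- On `Γ_k^+`, all `σ_j` with `1 ≤ j ≤ k` are positive. -/
lemma sigma_pos_on_gamma {N k : ℕ} (hk1 : 1 ≤ k) (hkN : k ≤ N) {y : Fin N → ℝ}
    (hy : y ∈ GammaPlus N k) :
    ∀ j, 1 ≤ j → j ≤ k → 0 < sigmaElem N j y := by
  classical
  set U : Set (Fin N → ℝ) := ⋂ j ∈ Finset.Icc 1 k, {x | 0 < sigmaElem N j x} with hU
  have hUopen : IsOpen U :=
    isOpen_biInter_finset fun j _ => isOpen_Spos N j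
  have hkey : ∀ z ∈ GammaPlus N k, z ∈ closure U → z ∈ U := by
    intro z hz hzc
    have hnn : ∀ j, 1 ≤ j → j ≤ k → 0 ≤ sigmaElem N j z := by
      intro j h1 h2
      have hsub : U ⊆ {x | 0 < sigmaElem N j x} :=
        Set.biInter_subset_of_mem (Finset.mem_Icc.mpr ⟨h1, h2⟩)
      have hcl : closure {x : Fin N → ℝ | 0 < sigmaElem N j x}
          ⊆ {x | 0 ≤ sigmaElem N j x} :=
        closure_minimal (fun w hw => le_of_lt (show 0 < sigmaElem N j w from hw))
          (isClosed_le continuous_const (sigmaElem_continuous N j))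
      exact hcl (closure_mono hsub hzc)
    have hk0 : 0 < sigmaElem N k z := by
      have h := connectedComponentIn_subset {x : Fin N → ℝ | 0 < sigmaElem N k x}
        (fun _ => 1) hz
      exact h
    have hall := sigma_pos_of_nonneg hk1 hkN z hnn hk0
    rw [hU]
    exact Set.mem_biInter fun j hj => by
      obtain ⟨h1, h2⟩ := Finset.mem_Icc.mp hj
      exact hall j h1 h2
  -- preconnectedness argument: Γ ⊆ U
  have hGU : GammaPlus N k ⊆ U := by
    have hpre : IsPreconnected (GammaPlus N k) := isPreconnected_connectedComponentIn
    have hcover : GammaPlus N k ⊆ U ∪ (closure U)ᶜ := by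
      intro z hz
      by_cases hzc : z ∈ closure U
      · exact Or.inl (hkey z hz hzc)
      · exact Or.inr hzc
    have hone : ((fun _ => (1:ℝ)) : Fin N → ℝ) ∈ GammaPlus N k ∩ U := by
      refine ⟨ones_mem_gamma hkN, ?_⟩
      rw [hU]
      exact Set.mem_biInter fun j hj => by
        obtain ⟨h1, h2⟩ := Finset.mem_Icc.mp hj
        exact ones_mem_Spos (le_trans h2 hkN)
    by_contra hnot
    rw [Set.not_subset] at hnot
    obtain ⟨w, hwG, hwU⟩ := hnot
    have hwv : w ∈ GammaPlus N k ∩ (closure U)ᶜ := by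
      refine ⟨hwG, fun hwc => hwU (hkey w hwG hwc)⟩
    obtain ⟨v, hvG, hvU, hvC⟩ := hpre U (closure U)ᶜ hUopen (isOpen_compl_iff.mpr isClosed_closure)
      hcover ⟨_, hone⟩ ⟨w, hwv⟩
    exact hvC (subset_closure hvU)
  intro j h1 h2
  have := hGU hy
  rw [hU] at this
  exact Set.mem_iInter₂.mp this j (Finset.mem_Icc.mpr ⟨h1, h2⟩)


lemma removeIdx_continuous {n : ℕ} (i : Fin (n + 1)) :
    Continuous (removeIdx i : (Fin (n + 1) → ℝ) → (Fin n → ℝ)) :=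
  continuous_pi fun j => continuous_apply _

/-- On `Γ_k^+ ⊆ ℝ^{n+1}`, `σ_{k-1}(Λ|i) > 0`. -/
lemma sigma_removeIdx_pos {n k : ℕ} (hk : 2 ≤ k) (hkn : k ≤ n + 1)
    {Λ : Fin (n + 1) → ℝ} (hΛ : Λ ∈ GammaPlus (n + 1) k) (i : Fin (n + 1)) :
    0 < sigmaElem n (k - 1) (removeIdx i Λ) := by
  -- Non-vanishing of σ_{k-1}(·|i) on Γ_k.
  have hnz : ∀ μ ∈ GammaPlus (n + 1) k, sigmaElem n (k - 1) (removeIdx i μ) ≠ 0 := by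
    intro μ hμ h0
    set f : ℝ → (Fin (n + 1) → ℝ) := fun t => Function.update μ i (μ i - t) with hf
    have hfc : Continuous f := by
      apply continuous_pi
      intro m
      by_cases hm : m = i
      · subst hm
        simp only [hf, Function.update_self]
        exact continuous_const.sub continuous_id
      · simp only [hf, Function.update_of_ne hm]
        exact continuous_const
    have hσk : ∀ t, sigmaElem (n + 1) k (f t) = sigmaElem (n + 1) k μ := by
      intro t
      have e1 := sigmaElem_update μ i (μ i - t) (j := k) (by omega) hkn
      have e2 := sigmaElem_update μ i (μ i) (j := k) (by omega) hkn
      rw [Function.update_eq_self] at e2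
      rw [hf]
      simp only
      rw [e1, e2, h0, mul_zero, mul_zero]
    have hline : ∀ t, f t ∈ GammaPlus (n + 1) k := by
      intro t
      have hconn : IsPreconnected (f '' Set.univ) :=
        isPreconnected_univ.image f hfc.continuousOn
      have hmemμ : μ ∈ f '' Set.univ :=
        ⟨0, trivial, by rw [hf]; simp⟩
      have hsub : f '' Set.univ ⊆ {x | 0 < sigmaElem (n + 1) k x} := by
        rintro _ ⟨t', -, rfl⟩
        show 0 < sigmaElem (n + 1) k (f t')
        rw [hσk t']
        have h := connectedComponentIn_subset {x : Fin (n + 1) → ℝ | 0 < sigmaElem (n + 1) k x}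
          (fun _ => 1) hμ
        exact h
      have hsub2 := hconn.subset_connectedComponentIn hmemμ hsub
      have heq : connectedComponentIn {x : Fin (n + 1) → ℝ | 0 < sigmaElem (n + 1) k x} μ
          = GammaPlus (n + 1) k := (connectedComponentIn_eq hμ).symm
      rw [heq] at hsub2
      exact hsub2 ⟨t, trivial, rfl⟩
    -- yields a point of Γ_k with σ_1 = 0, contradicting positivity of σ_1 on Γ_k
    set T : ℝ := sigmaElem n 1 (removeIdx i μ) + μ i with hT
    have hremT : removeIdx i (f T) = removeIdx i μ := by
      funext m
      rw [hf]
      simp only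
      rw [removeIdx, removeIdx, Function.update_of_ne (Fin.succAbove_ne i m)]
    have hσ1 : sigmaElem (n + 1) 1 (f T) = sigmaElem n 1 (removeIdx i μ) + (μ i - T) := by
      have e := sigmaElem_update μ i (μ i - T) (j := 1) le_rfl (by omega)
      rw [hf]
      simp only
      rw [e, Nat.sub_self, sigmaElem_zero, mul_one]
    have hpos1 := sigma_pos_on_gamma (N := n + 1) (k := k) (by omega) hkn
      (hline T) 1 le_rfl (by omega)
    rw [hσ1, hT] at hpos1
    linarith
  -- sign constancy on the connected set Γ_k
  by_contra hle
  push_neg at hle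
  have hlt : sigmaElem n (k - 1) (removeIdx i Λ) < 0 := lt_of_le_of_ne hle (hnz Λ hΛ)
  have hgc : Continuous fun μ : Fin (n + 1) → ℝ => sigmaElem n (k - 1) (removeIdx i μ) :=
    (sigmaElem_continuous n (k - 1)).comp (removeIdx_continuous i)
  have hpre : IsPreconnected
      ((fun μ : Fin (n + 1) → ℝ => sigmaElem n (k - 1) (removeIdx i μ)) '' GammaPlus (n + 1) k) :=
    (isPreconnected_connectedComponentIn).image _ hgc.continuousOn
  have h1G : ((fun _ => (1:ℝ)) : Fin (n + 1) → ℝ) ∈ GammaPlus (n + 1) k := ones_mem_gamma hkn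
  have hval1 : 0 < sigmaElem n (k - 1) (removeIdx i ((fun _ => 1) : Fin (n + 1) → ℝ)) := by
    have hre : removeIdx i ((fun _ => 1) : Fin (n + 1) → ℝ) = fun _ => (1:ℝ) := rfl
    rw [hre, sigmaElem_ones]
    exact_mod_cast Nat.choose_pos (show k - 1 ≤ n by omega)
  have hIcc := hpre.Icc_subset (Set.mem_image_of_mem _ hΛ) (Set.mem_image_of_mem _ h1G)
  obtain ⟨μ, hμG, hμ0⟩ := hIcc ⟨le_of_lt hlt, le_of_lt hval1⟩
  exact hnz μ hμG hμ0

end GardingAux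

open GardingAux in
/-- if `Λ ∈ Γ_k^+` (resp. `Γ̄_k^+`) in `ℝ^{n+1}` with `2 ≤ k`,
then each `(Λ|i) ∈ Γ_{k-1}^+` (resp. `Γ̄_{k-1}^+`) in `ℝ^n`. -/
theorem gammaPlus_removeIdx (n k : ℕ) (hk : 2 ≤ k) (hkn : k ≤ n + 1)
    (Λ : Fin (n + 1) → ℝ) :
    (Λ ∈ GammaPlus (n + 1) k → ∀ i, removeIdx i Λ ∈ GammaPlus n (k - 1)) ∧
    (Λ ∈ closure (GammaPlus (n + 1) k) →
      ∀ i, removeIdx i Λ ∈ closure (GammaPlus n (k - 1))) := by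
  have himg : ∀ i : Fin (n + 1),
      removeIdx i '' GammaPlus (n + 1) k ⊆ GammaPlus n (k - 1) := by
    intro i
    apply IsPreconnected.subset_connectedComponentIn
    · exact (isPreconnected_connectedComponentIn).image _ (removeIdx_continuous i).continuousOn
    · exact ⟨(fun _ => 1), ones_mem_gamma hkn, rfl⟩
    · rintro _ ⟨μ, hμ, rfl⟩
      exact sigma_removeIdx_pos hk hkn hμ i
  constructor
  · intro hΛ i
    exact himg i ⟨Λ, hΛ, rfl⟩
  · intro hΛ i
    have h2 := image_closure_subset_closure_image (removeIdx_continuous i)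
      (s := GammaPlus (n + 1) k) (Set.mem_image_of_mem _ hΛ)
    exact closure_mono (by
      rintro _ ⟨μ, hμ, rfl⟩
      exact himg i ⟨μ, hμ, rfl⟩) h2
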